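/- For any a, b, v₁ ∈ ℝ, let u(s) = −log(cosh(s + a)) + b for s ∈ ℝ. Then 1 − u'(s)² > 0 for all s, and the cylindrical surface X(s,t) = (t, s, u(s)) satisfies the translating soliton equation with respect to v = (v₁, 0, 1) at every point of ℝ² (a Lorentzian grim reaper with spacelike rulings; equivalently, u solves u'' = u'² − 1). -/

import Mathlib

noncomputable section

/-- The Lorentzian (Minkowski) inner product on ℝ³:
`⟨a,b⟩ = a₁b₁ + a₂b₂ − a₃b₃`. -/
def mink (a b : Fin 3 → ℝ) : ℝ := a 0 * b 0 + a 1 * b 1 - a 2 * b 2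

/-- Determinant of the 3×3 matrix with rows `a`, `b`, `c`. -/
def det3 (a b c : Fin 3 → ℝ) : ℝ :=
  a 0 * (b 1 * c 2 - b 2 * c 1) - a 1 * (b 0 * c 2 - b 2 * c 0)
    + a 2 * (b 0 * c 1 - b 1 * c 0)

/-- Partial derivative `X_s` of a parametrized surface `X(s,t)`. -/
def pS (X : ℝ → ℝ → Fin 3 → ℝ) (s t : ℝ) : Fin 3 → ℝ := deriv (fun a => X a t) s

/-- Partial derivative `X_t`. -/
def pT (X : ℝ → ℝ → Fin 3 → ℝ) (s t : ℝ) : Fin 3 → ℝ := deriv (fun b => X s b) t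

/-- Second partial derivative `X_ss`. -/
def pSS (X : ℝ → ℝ → Fin 3 → ℝ) (s t : ℝ) : Fin 3 → ℝ := deriv (fun a => pS X a t) s

/-- Mixed second partial derivative `X_st`. -/
def pST (X : ℝ → ℝ → Fin 3 → ℝ) (s t : ℝ) : Fin 3 → ℝ := deriv (fun a => pT X a t) s

/-- Second partial derivative `X_tt`. -/
def pTT (X : ℝ → ℝ → Fin 3 → ℝ) (s t : ℝ) : Fin 3 → ℝ := deriv (fun b => pT X s b) t

/-- Coefficient `E = ⟨X_s, X_s⟩` of the first fundamental form. -/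
def coefE (X : ℝ → ℝ → Fin 3 → ℝ) (s t : ℝ) : ℝ := mink (pS X s t) (pS X s t)

/-- Coefficient `F = ⟨X_s, X_t⟩` of the first fundamental form. -/
def coefF (X : ℝ → ℝ → Fin 3 → ℝ) (s t : ℝ) : ℝ := mink (pS X s t) (pT X s t)

/-- Coefficient `G = ⟨X_t, X_t⟩` of the first fundamental form. -/
def coefG (X : ℝ → ℝ → Fin 3 → ℝ) (s t : ℝ) : ℝ := mink (pT X s t) (pT X s t)

/-- `EG − F²` at `(s,t)`. -/
def disc (X : ℝ → ℝ → Fin 3 → ℝ) (s t : ℝ) : ℝ :=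
  coefE X s t * coefG X s t - coefF X s t ^ 2

/-- The translating soliton equation with respect to the velocity `v` at the point `(s,t)`:
`E·det(X_s,X_t,X_tt) − 2F·det(X_s,X_t,X_st) + G·det(X_s,X_t,X_ss)
  = −|EG − F²|·det(X_s,X_t,v)`. -/
def SolitonEqAt (X : ℝ → ℝ → Fin 3 → ℝ) (v : Fin 3 → ℝ) (s t : ℝ) : Prop :=
  coefE X s t * det3 (pS X s t) (pT X s t) (pTT X s t)
    - 2 * coefF X s t * det3 (pS X s t) (pT X s t) (pST X s t)
    + coefG X s t * det3 (pS X s t) (pT X s t) (pSS X s t)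
  = -|disc X s t| * det3 (pS X s t) (pT X s t) v

section Aux

open Real

lemma hasDerivAt_vec3 {f g h : ℝ → ℝ} {f' g' h' : ℝ} {x : ℝ}
    (hf : HasDerivAt f f' x) (hg : HasDerivAt g g' x) (hh : HasDerivAt h h' x) :
    HasDerivAt (fun x => ![f x, g x, h x]) ![f', g', h'] x := by
  rw [hasDerivAt_pi]
  intro i
  fin_cases i <;> simpa

lemma hasDerivAt_u (a b : ℝ) (s : ℝ) :
    HasDerivAt (fun s => -Real.log (Real.cosh (s + a)) + b)
      (-(Real.sinh (s + a) / Real.cosh (s + a))) s := by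
  have h1 : HasDerivAt (fun s : ℝ => s + a) 1 s := (hasDerivAt_id s).add_const a
  have h2 : HasDerivAt (fun s : ℝ => Real.cosh (s + a)) (Real.sinh (s + a) * 1) s :=
    by have := (Real.hasDerivAt_cosh (s + a)).comp s h1; exact this
  have h3 := (h2.log (ne_of_gt (Real.cosh_pos _))).neg.add_const b
  simpa using h3

lemma hasDerivAt_u' (a : ℝ) (s : ℝ) :
    HasDerivAt (fun s => -(Real.sinh (s + a) / Real.cosh (s + a)))
      ((-(Real.sinh (s + a) / Real.cosh (s + a))) ^ 2 - 1) s := by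
  have h1 : HasDerivAt (fun s : ℝ => s + a) 1 s := (hasDerivAt_id s).add_const a
  have hs : HasDerivAt (fun s : ℝ => Real.sinh (s + a)) (Real.cosh (s + a) * 1) s :=
    by have := (Real.hasDerivAt_sinh (s + a)).comp s h1; exact this
  have hc : HasDerivAt (fun s : ℝ => Real.cosh (s + a)) (Real.sinh (s + a) * 1) s :=
    by have := (Real.hasDerivAt_cosh (s + a)).comp s h1; exact this
  have hd := (hs.div hc (ne_of_gt (Real.cosh_pos _))).neg
  have key : Real.cosh (s + a) ^ 2 - Real.sinh (s + a) ^ 2 = 1 :=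
    Real.cosh_sq_sub_sinh_sq (s + a)
  have hcne : Real.cosh (s + a) ≠ 0 := ne_of_gt (Real.cosh_pos _)
  have : -((Real.cosh (s + a) * 1 * Real.cosh (s + a)
        - Real.sinh (s + a) * (Real.sinh (s + a) * 1)) / Real.cosh (s + a) ^ 2)
      = (-(Real.sinh (s + a) / Real.cosh (s + a))) ^ 2 - 1 := by
    field_simp
    nlinarith [key]
  rwa [this] at hd

end Aux

/-- The Lorentzian grim reaper `u(s) = −log cosh(s+a) + b` satisfies
`1 − u'² > 0` and `u'' = u'² − 1` everywhere, and the cylindrical surface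
`X(s,t) = (t, s, u(s))` is a translating soliton with respect to `v = (v₁,0,1)`. -/


theorem stmt5 (a b v₁ : ℝ) (u : ℝ → ℝ)
    (hu : u = fun s => -Real.log (Real.cosh (s + a)) + b) :
    (∀ s : ℝ, 1 - (deriv u s) ^ 2 > 0) ∧
    (∀ s : ℝ, deriv (deriv u) s = (deriv u s) ^ 2 - 1) ∧
    (∀ s t : ℝ, SolitonEqAt (fun s t => ![t, s, u s]) ![v₁, 0, 1] s t) := by
  set d : ℝ → ℝ := fun s => -(Real.sinh (s + a) / Real.cosh (s + a)) with hd
  have hud : ∀ s, HasDerivAt u (d s) s := by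
    intro s; rw [hu]; exact hasDerivAt_u a b s
  have hderiv : deriv u = d := by
    funext s; exact (hud s).deriv
  have hd' : ∀ s, HasDerivAt d (d s ^ 2 - 1) s := fun s => hasDerivAt_u' a s
  have hpos : ∀ s, 1 - d s ^ 2 > 0 := by
    intro s
    have hcne : Real.cosh (s + a) ≠ 0 := ne_of_gt (Real.cosh_pos _)
    have key : Real.cosh (s + a) ^ 2 - Real.sinh (s + a) ^ 2 = 1 :=
      Real.cosh_sq_sub_sinh_sq (s + a)
    have : 1 - d s ^ 2 = 1 / Real.cosh (s + a) ^ 2 := by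
      simp only [hd]
      rw [neg_sq, div_pow, eq_div_iff (by positivity), sub_mul, one_mul,
        div_mul_cancel₀ _ (pow_ne_zero 2 hcne)]
      linarith [key]
    rw [this]
    positivity
  refine ⟨?_, ?_, ?_⟩
  · intro s; rw [hderiv]; exact hpos s
  · intro s; rw [hderiv]; exact (hd' s).deriv
  · intro s t
    have hpS : ∀ s t : ℝ, pS (fun s t => ![t, s, u s]) s t = ![0, 1, d s] := by
      intro s t
      have : HasDerivAt (fun a : ℝ => ![t, a, u a]) ![0, 1, d s] s :=
        hasDerivAt_vec3 (hasDerivAt_const s t) (hasDerivAt_id s) (hud s)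
      exact this.deriv
    have hpT : ∀ s t : ℝ, pT (fun s t => ![t, s, u s]) s t = ![1, 0, 0] := by
      intro s t
      have : HasDerivAt (fun b : ℝ => ![b, s, u s]) ![1, 0, 0] t :=
        hasDerivAt_vec3 (hasDerivAt_id t) (hasDerivAt_const t s) (hasDerivAt_const t (u s))
      exact this.deriv
    have hpSS : pSS (fun s t => ![t, s, u s]) s t = ![0, 0, d s ^ 2 - 1] := by
      unfold pSS
      have he : (fun a => pS (fun s t => ![t, s, u s]) a t) = fun a => ![0, 1, d a] := by
        funext a; exact hpS a t
      rw [he]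
      have : HasDerivAt (fun a : ℝ => ![(0:ℝ), 1, d a]) ![0, 0, d s ^ 2 - 1] s :=
        hasDerivAt_vec3 (hasDerivAt_const s 0) (hasDerivAt_const s 1) (hd' s)
      exact this.deriv
    have hpST : pST (fun s t => ![t, s, u s]) s t = ![0, 0, 0] := by
      unfold pST
      have he : (fun a => pT (fun s t => ![t, s, u s]) a t) = fun _ => ![(1:ℝ), 0, 0] := by
        funext a; exact hpT a t
      rw [he]
      have : HasDerivAt (fun _ : ℝ => ![(1:ℝ), 0, 0]) ![0, 0, 0] s :=
        hasDerivAt_vec3 (hasDerivAt_const s 1) (hasDerivAt_const s 0) (hasDerivAt_const s 0)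
      exact this.deriv
    have hpTT : pTT (fun s t => ![t, s, u s]) s t = ![0, 0, 0] := by
      unfold pTT
      have he : (fun b => pT (fun s t => ![t, s, u s]) s b) = fun _ => ![(1:ℝ), 0, 0] := by
        funext b; exact hpT s b
      rw [he]
      have : HasDerivAt (fun _ : ℝ => ![(1:ℝ), 0, 0]) ![0, 0, 0] t :=
        hasDerivAt_vec3 (hasDerivAt_const t 1) (hasDerivAt_const t 0) (hasDerivAt_const t 0)
      exact this.deriv
    simp only [SolitonEqAt, coefE, coefF, coefG, disc, mink, det3]
    rw [hpS, hpT, hpSS, hpST, hpTT]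
    have habs : |(0 * 0 + 1 * 1 - d s * d s) * (1 * 1 + 0 * 0 - 0 * 0)
        - (0 * 1 + 1 * 0 - d s * 0) ^ 2| = 1 - d s ^ 2 := by
      rw [abs_of_pos]
      · ring
      · have := hpos s; nlinarith
    simp only [Matrix.cons_val_zero, Matrix.cons_val_one, Matrix.head_cons,
      Matrix.cons_val_two, Matrix.tail_cons]
    rw [habs]
    ring
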